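/- Let Ω be a nonempty compact metric space, f : Ω → Ω a continuous map, ε > 0, and α an open cover of Ω each of whose members has diameter at most ε. Then for every n ≥ 1, every (n,ε)-separated set E ⊆ Ω, and every subfamily 𝒱 ⊆ α⁽ⁿ⁾ that covers Ω, no two distinct points of E lie in a common member of 𝒱, so |E| ≤ |𝒱|; consequently s(n,ε) ≤ N(α⁽ⁿ⁾). -/
import Mathlib


open Filter Set Function

noncomputable section

variable {Ω : Type*}

/-- The Bowen (dynamical) metric `dₙ(x,y) = max_{0 ≤ t < n} d(f^[t] x, f^[t] y)`. -/
def bowenDist [PseudoMetricSpace Ω] (f : Ω → Ω) (n : ℕ) (x y : Ω) : ℝ :=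
  ⨆ t : Fin n, dist (f^[(t : ℕ)] x) (f^[(t : ℕ)] y)

/-- `A` is `(n,ε)`-spanning: every point of `Ω` is within Bowen distance `ε` of `A`. -/
def IsDynSpanning [PseudoMetricSpace Ω] (f : Ω → Ω) (n : ℕ) (ε : ℝ) (A : Set Ω) : Prop :=
  ∀ x : Ω, ∃ a ∈ A, bowenDist f n x a ≤ ε

/-- `A` is `(n,ε)`-separated: distinct points of `A` are more than `ε` apart
in the Bowen metric. -/
def IsDynSeparated [PseudoMetricSpace Ω] (f : Ω → Ω) (n : ℕ) (ε : ℝ) (A : Set Ω) : Prop :=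
  ∀ a ∈ A, ∀ a' ∈ A, a ≠ a' → ε < bowenDist f n a a'

/-- `r(n,ε)`: minimal cardinality of a finite `(n,ε)`-spanning subset of `Ω`. -/
def spanNum [PseudoMetricSpace Ω] (f : Ω → Ω) (n : ℕ) (ε : ℝ) : ℕ :=
  sInf {k : ℕ | ∃ A : Finset Ω, IsDynSpanning f n ε (↑A : Set Ω) ∧ A.card = k}

/-- `s(n,ε)`: maximal cardinality of a finite `(n,ε)`-separated subset of `Ω`. -/
def sepNum [PseudoMetricSpace Ω] (f : Ω → Ω) (n : ℕ) (ε : ℝ) : ℕ :=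
  sSup {k : ℕ | ∃ A : Finset Ω, IsDynSeparated f n ε (↑A : Set Ω) ∧ A.card = k}

/-- An open cover of `Ω`: a set of open sets whose union is all of `Ω`. -/
def IsOpenCover [TopologicalSpace Ω] (α : Set (Set Ω)) : Prop :=
  (∀ U ∈ α, IsOpen U) ∧ ⋃₀ α = univ

/-- The dynamical refinement `α⁽ⁿ⁾ = { U₀ ∩ f⁻¹ U₁ ∩ ⋯ ∩ f^[-(n-1)] U_{n-1} }`. -/
def dynRefinement (f : Ω → Ω) (n : ℕ) (α : Set (Set Ω)) : Set (Set Ω) :=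
  {V | ∃ U : Fin n → Set Ω, (∀ t, U t ∈ α) ∧ V = ⋂ t : Fin n, f^[(t : ℕ)] ⁻¹' U t}

/-- `N(β)`: minimal cardinality of a finite subcover of `β`. -/
def coverNum (β : Set (Set Ω)) : ℕ :=
  sInf {k : ℕ | ∃ γ : Finset (Set Ω), (↑γ : Set (Set Ω)) ⊆ β ∧
    ⋃₀ (↑γ : Set (Set Ω)) = univ ∧ γ.card = k}

/-- If every member of the open cover `α` has diameter at most `ε`, then for every `n ≥ 1`,
no two distinct points of an `(n,ε)`-separated set lie in a common member of a subfamily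
`𝒱 ⊆ α⁽ⁿ⁾` covering `Ω`; hence `|E| ≤ |𝒱|` for finite such families, and consequently
`s(n,ε) ≤ N(α⁽ⁿ⁾)`. -/
theorem sepNum_le_coverNum_dynRefinement [MetricSpace Ω] [CompactSpace Ω] [Nonempty Ω]
    (f : Ω → Ω) (hf : Continuous f) (ε : ℝ) (hε : 0 < ε)
    (α : Set (Set Ω)) (hα : IsOpenCover α)
    (hdiam : ∀ U ∈ α, EMetric.diam U ≤ ENNReal.ofReal ε) :
    ∀ n : ℕ, 1 ≤ n →
      (∀ E : Set Ω, IsDynSeparated f n ε E →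
        ∀ 𝒱 : Set (Set Ω), 𝒱 ⊆ dynRefinement f n α → ⋃₀ 𝒱 = univ →
          ∀ V ∈ 𝒱, ∀ x ∈ E, ∀ y ∈ E, x ≠ y → ¬(x ∈ V ∧ y ∈ V)) ∧
      (∀ (E : Finset Ω) (𝒱 : Finset (Set Ω)), IsDynSeparated f n ε (↑E : Set Ω) →
        (↑𝒱 : Set (Set Ω)) ⊆ dynRefinement f n α → ⋃₀ (↑𝒱 : Set (Set Ω)) = univ →
        E.card ≤ 𝒱.card) ∧
      sepNum f n ε ≤ coverNum (dynRefinement f n α) := by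
  intro n hn
  haveI : Nonempty (Fin n) := ⟨⟨0, hn⟩⟩
  -- key: two points in a common member of α⁽ⁿ⁾ are within Bowen distance ε
  have key : ∀ V ∈ dynRefinement f n α, ∀ x ∈ V, ∀ y ∈ V, bowenDist f n x y ≤ ε := by
    rintro V ⟨U, hU, rfl⟩ x hx y hy
    apply ciSup_le
    intro t
    have hxt : f^[(t : ℕ)] x ∈ U t := mem_iInter.1 hx t
    have hyt : f^[(t : ℕ)] y ∈ U t := mem_iInter.1 hy t
    have h1 : edist (f^[(t : ℕ)] x) (f^[(t : ℕ)] y) ≤ ENNReal.ofReal ε :=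
      le_trans (EMetric.edist_le_diam_of_mem hxt hyt) (hdiam (U t) (hU t))
    exact (edist_le_ofReal hε.le).1 h1
  have part1 : ∀ E : Set Ω, IsDynSeparated f n ε E →
      ∀ 𝒱 : Set (Set Ω), 𝒱 ⊆ dynRefinement f n α → ⋃₀ 𝒱 = univ →
        ∀ V ∈ 𝒱, ∀ x ∈ E, ∀ y ∈ E, x ≠ y → ¬(x ∈ V ∧ y ∈ V) := by
    rintro E hE 𝒱 h𝒱 hcov V hV x hx y hy hxy ⟨hxV, hyV⟩
    exact absurd (key V (h𝒱 hV) x hxV y hyV) (not_le.2 (hE x hx y hy hxy))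
  have part2 : ∀ (E : Finset Ω) (𝒱 : Finset (Set Ω)), IsDynSeparated f n ε (↑E : Set Ω) →
      (↑𝒱 : Set (Set Ω)) ⊆ dynRefinement f n α → ⋃₀ (↑𝒱 : Set (Set Ω)) = univ →
      E.card ≤ 𝒱.card := by
    intro E 𝒱 hE h𝒱 hcov
    have hchoice : ∀ x : Ω, ∃ V ∈ (↑𝒱 : Set (Set Ω)), x ∈ V := by
      intro x
      exact mem_sUnion.1 (hcov ▸ mem_univ x)
    choose g hg1 hg2 using hchoice
    apply Finset.card_le_card_of_injOn g (fun x _ => Finset.mem_coe.1 (hg1 x))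
    intro x hx y hy hgxy
    by_contra hne
    exact part1 (↑E) hE (↑𝒱) h𝒱 hcov (g x) (hg1 x) x hx y hy hne
      ⟨hg2 x, hgxy ▸ hg2 y⟩
  refine ⟨part1, part2, ?_⟩
  -- the dynamical refinement is an open cover
  have hopen : ∀ V ∈ dynRefinement f n α, IsOpen V := by
    rintro V ⟨U, hU, rfl⟩
    exact isOpen_iInter_of_finite fun t => (hα.1 _ (hU t)).preimage (hf.iterate t)
  have hcov : univ ⊆ ⋃ V ∈ dynRefinement f n α, V := by
    intro x _
    have hex : ∀ t : Fin n, ∃ U ∈ α, f^[(t : ℕ)] x ∈ U := by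
      intro t
      exact mem_sUnion.1 (hα.2 ▸ mem_univ _)
    choose U hU hxU using hex
    refine mem_iUnion₂.2 ⟨⋂ t : Fin n, f^[(t : ℕ)] ⁻¹' U t, ⟨U, hU, rfl⟩, ?_⟩
    exact mem_iInter.2 fun t => hxU t
  obtain ⟨b, hb_sub, hb_fin, hb_cov⟩ :=
    isCompact_univ.elim_finite_subcover_image (fun V hV => hopen V hV) hcov
  have hCne : {k : ℕ | ∃ γ : Finset (Set Ω), (↑γ : Set (Set Ω)) ⊆ dynRefinement f n α ∧
      ⋃₀ (↑γ : Set (Set Ω)) = univ ∧ γ.card = k}.Nonempty := by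
    refine ⟨hb_fin.toFinset.card, hb_fin.toFinset, ?_, ?_, rfl⟩
    · rw [hb_fin.coe_toFinset]; exact hb_sub
    · apply eq_univ_of_univ_subset
      rw [hb_fin.coe_toFinset, sUnion_eq_biUnion]
      exact hb_cov
  obtain ⟨γ, hγsub, hγcov, hγcard⟩ := Nat.sInf_mem hCne
  have h0 : (0 : ℕ) ∈ {k : ℕ | ∃ A : Finset Ω, IsDynSeparated f n ε (↑A : Set Ω) ∧
      A.card = k} := by
    refine ⟨∅, ?_, Finset.card_empty⟩
    intro a ha
    simp at ha
  apply csSup_le ⟨0, h0⟩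
  rintro k ⟨A, hA, rfl⟩
  calc A.card ≤ γ.card := part2 A γ hA hγsub hγcov
    _ = coverNum (dynRefinement f n α) := hγcard
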